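/- Let (γ, λ) ∈ D with γ > 0, so that x³ − x − λ has three distinct real roots α_min < α_c < α_max. Set z₀ = √((1−γ)/3) and g(x) = (2/γ)(x³ − (1−γ)x − λ). Then: (i) α_max ≤ 2z₀ and −α_min ≤ 2z₀; (ii) every x ∈ (−∞, −z₀] with 2α_min ≤ g(x) ≤ 2α_max satisfies α_min ≤ x ≤ α_min + √γ; (iii) every x ∈ [−z₀, z₀] with 2α_min ≤ g(x) ≤ 2α_max satisfies |x − α_c| ≤ √γ; (iv) every x ∈ [z₀, ∞) with 2α_min ≤ g(x) ≤ 2α_max satisfies α_max − √γ ≤ x ≤ α_max. -/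

import Mathlib

set_option maxHeartbeats 2000000

private lemma aux_quad (u v : ℝ) (h1 : 1 ≤ v) (h2 : v < u) :
    0 < u ^ 2 + u * v + v ^ 2 - 1 := by nlinarith

private lemma aux_abs (b : ℝ) (h : 3 * b ^ 2 < 1) : -1 < b ∧ b < 1 := by
  constructor <;> nlinarith


/-- Bounds on the horseshoe strips: for `(γ, λ) ∈ D` with `γ > 0`,
the roots satisfy `α_max ≤ 2z₀`, `-α_min ≤ 2z₀`, and the preimages under
`g(x) = (2/γ)(x³ - (1-γ)x - λ)` of `[2α_min, 2α_max]` in the three monotonicity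
intervals of `g` lie within `√γ` of the corresponding root. -/
theorem stmt_5 (γ lam : ℝ) (hγpos : 0 < γ) (hγ : γ ≤ 1 / 4)
    (hlam : |lam| ≤ 2 / (3 * Real.sqrt 3))
    (αhat : ℝ) (hαhat : IsGreatest {ξ : ℝ | ξ ^ 3 - ξ = |lam|} αhat)
    (hD : |lam| + γ * αhat ≤ 2 / (3 * Real.sqrt 3) * (1 - γ) ^ ((3 : ℝ) / 2))
    (αmin αc αmax : ℝ) (h1 : αmin < αc) (h2 : αc < αmax)
    (hrmin : αmin ^ 3 - αmin = lam) (hrc : αc ^ 3 - αc = lam)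
    (hrmax : αmax ^ 3 - αmax = lam) :
    (αmax ≤ 2 * Real.sqrt ((1 - γ) / 3) ∧ -αmin ≤ 2 * Real.sqrt ((1 - γ) / 3)) ∧
    (∀ x : ℝ, x ≤ -Real.sqrt ((1 - γ) / 3) →
      2 * αmin ≤ (2 / γ) * (x ^ 3 - (1 - γ) * x - lam) →
      (2 / γ) * (x ^ 3 - (1 - γ) * x - lam) ≤ 2 * αmax →
      αmin ≤ x ∧ x ≤ αmin + Real.sqrt γ) ∧
    (∀ x : ℝ, -Real.sqrt ((1 - γ) / 3) ≤ x → x ≤ Real.sqrt ((1 - γ) / 3) →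
      2 * αmin ≤ (2 / γ) * (x ^ 3 - (1 - γ) * x - lam) →
      (2 / γ) * (x ^ 3 - (1 - γ) * x - lam) ≤ 2 * αmax →
      |x - αc| ≤ Real.sqrt γ) ∧
    (∀ x : ℝ, Real.sqrt ((1 - γ) / 3) ≤ x →
      2 * αmin ≤ (2 / γ) * (x ^ 3 - (1 - γ) * x - lam) →
      (2 / γ) * (x ^ 3 - (1 - γ) * x - lam) ≤ 2 * αmax →
      αmax - Real.sqrt γ ≤ x ∧ x ≤ αmax) := by
  have hγ1 : γ < 1 := by linarith
  set s := Real.sqrt γ with hs_def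
  set z := Real.sqrt ((1 - γ) / 3) with hz_def
  have hs2 : s ^ 2 = γ := Real.sq_sqrt hγpos.le
  have hz2 : z ^ 2 = (1 - γ) / 3 := Real.sq_sqrt (by linarith)
  have hs_pos : 0 < s := Real.sqrt_pos.2 hγpos
  have hz_pos : 0 < z := Real.sqrt_pos.2 (by linarith)
  have hss : s * s = γ := by rw [← hs2]; ring
  have hs_half : s ≤ 1 / 2 :=
    le_of_pow_le_pow_left₀ two_ne_zero (by norm_num) (by rw [hs2]; norm_num; linarith)
  have hz_half : 1 / 2 ≤ z :=
    le_of_pow_le_pow_left₀ two_ne_zero hz_pos.le (by rw [hz2]; norm_num; linarith)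
  have h3z : 3 * z ^ 2 = 1 - s ^ 2 := by rw [hs2, hz2]; ring
  -- Vieta
  have hac : αmin ^ 2 + αmin * αmax + αmax ^ 2 = 1 := by
    have h : (αmax - αmin) * (αmin ^ 2 + αmin * αmax + αmax ^ 2 - 1) = 0 := by
      linear_combination hrmax - hrmin
    rcases mul_eq_zero.1 h with h | h
    · exfalso; linarith
    · linarith
  have hab : αmin ^ 2 + αmin * αc + αc ^ 2 = 1 := by
    have h : (αc - αmin) * (αmin ^ 2 + αmin * αc + αc ^ 2 - 1) = 0 := by
      linear_combination hrc - hrmin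
    rcases mul_eq_zero.1 h with h | h
    · exfalso; linarith
    · linarith
  have hbc : αc ^ 2 + αc * αmax + αmax ^ 2 = 1 := by
    have h : (αmax - αc) * (αc ^ 2 + αc * αmax + αmax ^ 2 - 1) = 0 := by
      linear_combination hrmax - hrc
    rcases mul_eq_zero.1 h with h | h
    · exfalso; linarith
    · linarith
  have hsum : αmin + αc + αmax = 0 := by
    have h : (αmin - αmax) * (αmin + αc + αmax) = 0 := by
      linear_combination hab - hbc
    rcases mul_eq_zero.1 h with h | h
    · exfalso; linarith
    · linarith
  have hprod : αmin * αc + αmin * αmax + αc * αmax = -1 := by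
    linear_combination (αmin + αmax) * hsum - hac
  have habc : αmin * αc * αmax = lam := by
    linear_combination hrc + αc * (αmin + αmax - αc) * hsum - αc * hac
  have hfact : ∀ x : ℝ, x ^ 3 - x - lam = (x - αmin) * (x - αc) * (x - αmax) := by
    intro x
    linear_combination x ^ 2 * hsum - x * hprod + habc
  -- sign facts for roots
  have hacb : αmin * αmax = αc ^ 2 - 1 := by
    linear_combination (αmin + αmax - αc) * hsum - hac
  have keyb : (αc - αmin) * (αc - αmax) = 3 * αc ^ 2 - 1 := by
    linear_combination (-αc) * hsum + hacb
  have hb2 : 3 * αc ^ 2 < 1 := by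
    have := mul_neg_of_pos_of_neg (sub_pos.2 h1) (sub_neg.2 h2)
    linarith [keyb]
  have habb : αmin * αc = αmax ^ 2 - 1 := by
    linear_combination (αmin + αc - αmax) * hsum - hab
  have keyc : (αmax - αmin) * (αmax - αc) = 3 * αmax ^ 2 - 1 := by
    linear_combination (-αmax) * hsum + habb
  have hc2 : 1 < 3 * αmax ^ 2 := by
    have := mul_pos (sub_pos.2 (h1.trans h2)) (sub_pos.2 h2)
    linarith [keyc]
  have hbcb : αc * αmax = αmin ^ 2 - 1 := by
    linear_combination (αc + αmax - αmin) * hsum - hbc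
  have keya : (αmin - αc) * (αmin - αmax) = 3 * αmin ^ 2 - 1 := by
    linear_combination (-αmin) * hsum + hbcb
  have ha2 : 1 < 3 * αmin ^ 2 := by
    have := mul_pos_of_neg_of_neg (sub_neg.2 h1) (sub_neg.2 (h1.trans h2))
    linarith [keya]
  have hc_pos : 0 < αmax := by
    by_contra h; push_neg at h; linarith
  have ha_neg : αmin < 0 := by
    by_contra h; push_neg at h; linarith
  have hc_gt_z : z < αmax := by
    refine lt_of_pow_lt_pow_left₀ 2 hc_pos.le ?_
    linarith [hz2, hc2]
  have ha_lt_z : αmin < -z := by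
    have h : z < -αmin := by
      refine lt_of_pow_lt_pow_left₀ 2 (by linarith) ?_
      have e : (-αmin) ^ 2 = αmin ^ 2 := by ring
      linarith [hz2, ha2]
    linarith
  -- αhat ≥ 1
  have hsqrt3 : Real.sqrt 3 ^ 2 = 3 := Real.sq_sqrt (by norm_num)
  have hsqrt3_pos : 0 < Real.sqrt 3 := Real.sqrt_pos.2 (by norm_num)
  have hsqrt3_ge : 1 ≤ Real.sqrt 3 :=
    le_of_pow_le_pow_left₀ two_ne_zero (Real.sqrt_nonneg 3) (by rw [hsqrt3]; norm_num)
  have hlam1 : |lam| ≤ 1 := by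
    have h : 2 / (3 * Real.sqrt 3) ≤ 1 := by
      rw [div_le_one (by positivity)]
      linarith
    linarith
  have hαhat1 : 1 ≤ αhat := by
    obtain ⟨ξ, hξI, hξeq⟩ := intermediate_value_Icc (by norm_num : (1:ℝ) ≤ 2)
      (Continuous.continuousOn (by continuity : Continuous fun x : ℝ => x ^ 3 - x))
      (by
        constructor
        · simpa using abs_nonneg lam
        · show |lam| ≤ (2:ℝ) ^ 3 - 2
          norm_num
          linarith : |lam| ∈ Set.Icc ((fun x : ℝ => x ^ 3 - x) 1) ((fun x : ℝ => x ^ 3 - x) 2))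
    have := hαhat.2 hξeq
    linarith [hξI.1]
  have hhat_eq : αhat ^ 3 - αhat = |lam| := hαhat.1
  have hc_le : αmax ≤ αhat := by
    by_contra h; push_neg at h
    have hq := aux_quad αmax αhat hαhat1 h
    have hp := mul_pos (sub_pos.2 h) hq
    have e : (αmax - αhat) * (αmax ^ 2 + αmax * αhat + αhat ^ 2 - 1) = lam - |lam| := by
      linear_combination hrmax - hhat_eq
    linarith [le_abs_self lam]
  have ha_le : -αmin ≤ αhat := by
    by_contra h; push_neg at h
    have hma : 1 < -αmin := by linarith
    have hq := aux_quad (-αmin) αhat hαhat1 h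
    have hp := mul_pos (sub_pos.2 h) hq
    have e : (-αmin - αhat) * ((-αmin) ^ 2 + (-αmin) * αhat + αhat ^ 2 - 1) = -lam - |lam| := by
      linear_combination (-1 : ℝ) * hrmin - hhat_eq
    linarith [neg_abs_le lam]
  -- rpow computation
  have hrpow : 2 / (3 * Real.sqrt 3) * (1 - γ) ^ ((3 : ℝ) / 2) = 2 * z ^ 3 := by
    have h1γ : (0:ℝ) < 1 - γ := by linarith
    have e1 : (1 - γ) ^ ((3 : ℝ) / 2) = (1 - γ) * Real.sqrt (1 - γ) := by
      rw [show (3:ℝ)/2 = 1 + 1/2 by norm_num, Real.rpow_add h1γ, Real.rpow_one,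
        ← Real.sqrt_eq_rpow]
    have e2 : Real.sqrt 3 * z = Real.sqrt (1 - γ) := by
      rw [hz_def, ← Real.sqrt_mul (by norm_num : (0:ℝ) ≤ 3)]
      congr 1
      ring
    rw [e1, ← e2]
    have e3 : (1 - γ) = 3 * z ^ 2 := by linarith [hz2]
    rw [e3]
    field_simp
  -- part (i)
  have hg_c : γ * αmax ≤ γ * αhat := mul_le_mul_of_nonneg_left hc_le hγpos.le
  have hg_a : γ * (-αmin) ≤ γ * αhat := mul_le_mul_of_nonneg_left ha_le hγpos.le
  have e3 : (1 - γ) = 3 * z ^ 2 := by linarith [hz2]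
  have hDc : αmax ^ 3 - 3 * z ^ 2 * αmax ≤ 2 * z ^ 3 := by
    have hDc0 : αmax ^ 3 - αmax + γ * αmax ≤ 2 * z ^ 3 := by
      linarith [hD, hrpow, le_abs_self lam, hg_c, hrmax]
    have e4 : 3 * z ^ 2 * αmax = (1 - γ) * αmax := by rw [e3]
    linarith [hDc0, e4]
  have hc2z : αmax ≤ 2 * z := by
    by_contra h; push_neg at h
    have hp := mul_pos (sub_pos.2 h) (pow_pos (show (0:ℝ) < αmax + z by linarith) 2)
    have e : (αmax - 2 * z) * (αmax + z) ^ 2 = αmax ^ 3 - 3 * z ^ 2 * αmax - 2 * z ^ 3 := by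
      ring
    linarith [hDc]
  have hDa : (-αmin) ^ 3 - 3 * z ^ 2 * (-αmin) ≤ 2 * z ^ 3 := by
    have e : (-αmin) ^ 3 = -(αmin ^ 3) := by ring
    have hDa0 : (-αmin) ^ 3 - (-αmin) + γ * (-αmin) ≤ 2 * z ^ 3 := by
      linarith [hD, hrpow, neg_abs_le lam, hg_a, hrmin, e]
    have e4 : 3 * z ^ 2 * (-αmin) = (1 - γ) * (-αmin) := by rw [e3]
    linarith [hDa0, e4]
  have ha2z : -αmin ≤ 2 * z := by
    by_contra h; push_neg at h
    have hp := mul_pos (sub_pos.2 h) (pow_pos (show (0:ℝ) < -αmin + z by linarith) 2)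
    have e : (-αmin - 2 * z) * (-αmin + z) ^ 2 =
        (-αmin) ^ 3 - 3 * z ^ 2 * (-αmin) - 2 * z ^ 3 := by ring
    linarith [hDa]
  -- structural claims
  have hb_abs := aux_abs αc hb2
  have hmb2z : αmin + αmax - 2 * z ≤ 0 := by
    -- αmin + αmax = -αc, and -αc < 1 ≤ 2z
    linarith [hb_abs.1, hsum, hz_half]
  have hcb2z : αc + αmax - 2 * z ≤ 0 := by linarith [ha2z, hsum]
  have hab2z : αmin + αc + 2 * z ≥ 0 := by linarith [hc2z, hsum]
  have hB : z + s ≤ αmax := by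
    have hp : (αmin + 2 * z) * (αmin + αmax - 2 * z) ≤ 0 :=
      mul_nonpos_of_nonneg_of_nonpos (by linarith) hmb2z
    have step : s ^ 2 ≤ (αmax - z) ^ 2 := by linarith [hp, hac, h3z]
    have := le_of_pow_le_pow_left₀ two_ne_zero (by linarith : (0:ℝ) ≤ αmax - z) step
    linarith
  have hC : z + s ≤ -αmin := by
    have hp : (αmax - 2 * z) * (αmin + αmax + 2 * z) ≤ 0 :=
      mul_nonpos_of_nonpos_of_nonneg (by linarith [hc2z]) (by linarith [hb_abs.2, hsum, hz_half])
    have step : s ^ 2 ≤ (-(αmin + z)) ^ 2 := by linarith [hp, hac, h3z]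
    have := le_of_pow_le_pow_left₀ two_ne_zero (by linarith : (0:ℝ) ≤ -(αmin + z)) step
    linarith
  have hzs13 : 1 / 3 < (z + s) ^ 2 := by
    linarith [h3z, mul_pos hz_pos hs_pos, pow_pos hs_pos 2]
  have hbzs : αc < z + s := by
    rcases le_or_gt αc 0 with h | h
    · linarith
    · refine lt_of_pow_lt_pow_left₀ 2 (by linarith) ?_
      linarith [hb2]
  have hbzs' : -(z + s) < αc := by
    rcases le_or_gt 0 αc with h | h
    · linarith
    · have : -αc < z + s := by
        refine lt_of_pow_lt_pow_left₀ 2 (by linarith) ?_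
        have e : (-αc) ^ 2 = αc ^ 2 := by ring
        linarith [hb2]
      linarith
  have hA1 : αc ≤ z - s := by
    by_contra h; push_neg at h
    have hp : (αmax + 2 * z) * (αc + αmax - 2 * z) ≤ 0 :=
      mul_nonpos_of_nonneg_of_nonpos (by linarith) hcb2z
    have step : s ^ 2 ≤ (αc - z) ^ 2 := by linarith [hp, hbc, h3z]
    have hlt : (αc - z) ^ 2 < s ^ 2 := sq_lt_sq' (by linarith) (by linarith [hbzs])
    linarith
  have hA2 : s - z ≤ αc := by
    by_contra h; push_neg at h
    have hp : (αmin - 2 * z) * (αmin + αc + 2 * z) ≤ 0 :=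
      mul_nonpos_of_nonpos_of_nonneg (by linarith) hab2z
    have step : s ^ 2 ≤ (αc + z) ^ 2 := by linarith [hp, hab, h3z]
    have hlt : (αc + z) ^ 2 < s ^ 2 := sq_lt_sq' (by linarith [hbzs']) (by linarith)
    linarith
  refine ⟨⟨hc2z, ha2z⟩, ?_, ?_, ?_⟩
  · -- part (ii)
    intro x hx hg1 hg2
    rw [div_mul_eq_mul_div] at hg1 hg2
    have HL0 := (le_div_iff₀ hγpos).1 hg1
    have HU0 := (div_le_iff₀ hγpos).1 hg2
    have HL : γ * αmin ≤ (x - αmin) * (x - αc) * (x - αmax) + γ * x := by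
      linarith [hfact x]
    have HU : (x - αmin) * (x - αc) * (x - αmax) + γ * x ≤ γ * αmax := by
      linarith [hfact x]
    constructor
    · by_contra h; push_neg at h
      have f1 : 0 < αmin - x := by linarith
      have f2 : 0 < αc - x := by linarith
      have f3 : 0 < αmax - x := by linarith
      have hp := mul_pos (mul_pos f1 f2) f3
      have hgp := mul_pos hγpos f1
      linarith [HL]
    · by_contra h; push_neg at h
      have t1 : s < x - αmin := by linarith
      have t2 : s ≤ αc - x := by linarith [hA2]
      have t3 : 0 < αmax - x := by linarith [hc_gt_z, hz_pos]
      have m0 : s * s < (x - αmin) * s := mul_lt_mul_of_pos_right t1 hs_pos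
      have m0' : (x - αmin) * s ≤ (x - αmin) * (αc - x) :=
        mul_le_mul_of_nonneg_left t2 (by linarith)
      have m1 : γ < (x - αmin) * (αc - x) := by linarith [hss]
      have m2 := mul_lt_mul_of_pos_right m1 t3
      linarith [HU, m2]
  · -- part (iii)
    intro x hx1 hx2 hg1 hg2
    rw [div_mul_eq_mul_div] at hg1 hg2
    have HL0 := (le_div_iff₀ hγpos).1 hg1
    have HU0 := (div_le_iff₀ hγpos).1 hg2
    have HL : γ * αmin ≤ (x - αmin) * (x - αc) * (x - αmax) + γ * x := by
      linarith [hfact x]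
    have HU : (x - αmin) * (x - αc) * (x - αmax) + γ * x ≤ γ * αmax := by
      linarith [hfact x]
    rw [abs_le]
    constructor
    · by_contra h; push_neg at h
      have t1 : s < αc - x := by linarith
      have t2 : s ≤ x - αmin := by linarith [hC]
      have t3 : 0 < αmax - x := by linarith [hc_gt_z]
      have m0 : s * s < (αc - x) * s := mul_lt_mul_of_pos_right t1 hs_pos
      have m0' : (αc - x) * s ≤ (αc - x) * (x - αmin) :=
        mul_le_mul_of_nonneg_left t2 (by linarith)
      have m1 : γ < (αc - x) * (x - αmin) := by linarith [hss]
      have m2 := mul_lt_mul_of_pos_right m1 t3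
      linarith [HU, m2]
    · by_contra h; push_neg at h
      have t1 : s < x - αc := by linarith
      have t2 : s ≤ αmax - x := by linarith [hB]
      have t3 : 0 < x - αmin := by linarith [hC, hs_pos]
      have m0 : s * s < (x - αc) * s := mul_lt_mul_of_pos_right t1 hs_pos
      have m0' : (x - αc) * s ≤ (x - αc) * (αmax - x) :=
        mul_le_mul_of_nonneg_left t2 (by linarith)
      have m1 : γ < (x - αc) * (αmax - x) := by linarith [hss]
      have m2 := mul_lt_mul_of_pos_right m1 t3
      linarith [HL, m2]
  · -- part (iv)
    intro x hx hg1 hg2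
    rw [div_mul_eq_mul_div] at hg1 hg2
    have HL0 := (le_div_iff₀ hγpos).1 hg1
    have HU0 := (div_le_iff₀ hγpos).1 hg2
    have HL : γ * αmin ≤ (x - αmin) * (x - αc) * (x - αmax) + γ * x := by
      linarith [hfact x]
    have HU : (x - αmin) * (x - αc) * (x - αmax) + γ * x ≤ γ * αmax := by
      linarith [hfact x]
    constructor
    · by_contra h; push_neg at h
      have t1 : s < αmax - x := by linarith
      have t2 : s ≤ x - αc := by linarith [hA1]
      have t3 : 0 < x - αmin := by linarith [ha_lt_z, hz_pos]
      have m0 : s * s < (αmax - x) * s := mul_lt_mul_of_pos_right t1 hs_pos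
      have m0' : (αmax - x) * s ≤ (αmax - x) * (x - αc) :=
        mul_le_mul_of_nonneg_left t2 (by linarith)
      have m1 : γ < (αmax - x) * (x - αc) := by linarith [hss]
      have m2 := mul_lt_mul_of_pos_right m1 t3
      linarith [HL, m2]
    · by_contra h; push_neg at h
      have f1 : 0 < x - αmin := by linarith [ha_lt_z, hz_pos]
      have f2 : 0 < x - αc := by linarith [hbzs, hs_pos]
      have f3 : 0 < x - αmax := by linarith
      have hp := mul_pos (mul_pos f1 f2) f3
      have hgp := mul_pos hγpos f3
      linarith [HU]
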